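/- Let A be an n×n complex matrix, let V_{m+1} be an n×(m+1) matrix with orthonormal columns whose first m columns form V_m, let H̄_m be an (m+1)×m complex matrix with A V_m = V_{m+1} H̄_m, and suppose r₀ = β V_{m+1} e₁ for some β ∈ ℂ, where e₁ is the first standard basis vector of ℂ^{m+1}. Then for every y ∈ ℂᵐ, ‖r₀ − A V_m y‖₂ = ‖β e₁ − H̄_m y‖₂; consequently minimizing ‖b − A(x₀ + t)‖₂ over t ∈ range(V_m) is equivalent to minimizing ‖H̄_m y − β e₁‖₂ over y ∈ ℂᵐ. -/

import Mathlib

open Matrix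

noncomputable def enorm {ι : Type*} [Fintype ι] (v : ι → ℂ) : ℝ :=
  ‖(WithLp.equiv 2 (ι → ℂ)).symm v‖

lemma enorm_eq {ι : Type*} [Fintype ι] (v : ι → ℂ) :
    _root_.enorm v = Real.sqrt (star v ⬝ᵥ v).re := by
  rw [_root_.enorm, EuclideanSpace.norm_eq]
  congr 1
  simp [dotProduct, Complex.mul_conj', Complex.sq_norm]
  simp [Complex.normSq_apply]

lemma enorm_mulVec {n k : ℕ} (V : Matrix (Fin n) (Fin k) ℂ) (h : Vᴴ * V = 1)
    (w : Fin k → ℂ) : _root_.enorm (V.mulVec w) = _root_.enorm w := by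
  rw [enorm_eq, enorm_eq]
  congr 2
  rw [star_mulVec, dotProduct_mulVec, vecMul_vecMul, h, vecMul_one]

lemma enorm_neg_vec {ι : Type*} [Fintype ι] (v : ι → ℂ) : _root_.enorm (-v) = _root_.enorm v := by
  simp [_root_.enorm]

/-- With `V_{m+1}` having orthonormal columns, first `m` columns `V_m`,
Arnoldi relation `A V_m = V_{m+1} H̄_m`, and `r₀ = b − A x₀ = β V_{m+1} e₁`, we have
`‖r₀ − A V_m y‖₂ = ‖β e₁ − H̄_m y‖₂` for every `y ∈ ℂᵐ`; consequently minimizing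
`‖b − A(x₀ + V_m y)‖₂` is equivalent to minimizing `‖H̄_m y − β e₁‖₂`. -/
theorem gmres_least_squares_reduction {n m : ℕ}
    (A : Matrix (Fin n) (Fin n) ℂ)
    (V₁ : Matrix (Fin n) (Fin (m + 1)) ℂ)
    (hOrth : V₁ᴴ * V₁ = 1)
    (Vm : Matrix (Fin n) (Fin m) ℂ)
    (hV : Vm = V₁.submatrix id Fin.castSucc)
    (H : Matrix (Fin (m + 1)) (Fin m) ℂ)
    (hArnoldi : A * Vm = V₁ * H)
    (b x₀ r₀ : Fin n → ℂ) (β : ℂ)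
    (hr₀ : r₀ = b - A.mulVec x₀)
    (hcol : r₀ = β • V₁.mulVec (Pi.single 0 1)) :
    (∀ y : Fin m → ℂ,
        _root_.enorm (r₀ - (A * Vm).mulVec y) =
          _root_.enorm (β • (Pi.single 0 1 : Fin (m + 1) → ℂ) - H.mulVec y)) ∧
      ∀ y : Fin m → ℂ,
        (∀ z : Fin m → ℂ,
            _root_.enorm (b - A.mulVec (x₀ + Vm.mulVec y)) ≤
              _root_.enorm (b - A.mulVec (x₀ + Vm.mulVec z))) ↔
          (∀ z : Fin m → ℂ,
            _root_.enorm (H.mulVec y - β • (Pi.single 0 1 : Fin (m + 1) → ℂ)) ≤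
              _root_.enorm (H.mulVec z - β • (Pi.single 0 1 : Fin (m + 1) → ℂ))) := by
  have key : ∀ y : Fin m → ℂ,
      _root_.enorm (r₀ - (A * Vm).mulVec y) =
        _root_.enorm (β • (Pi.single 0 1 : Fin (m + 1) → ℂ) - H.mulVec y) := by
    intro y
    have : r₀ - (A * Vm).mulVec y
        = V₁.mulVec (β • (Pi.single 0 1 : Fin (m + 1) → ℂ) - H.mulVec y) := by
      rw [hcol, hArnoldi, ← mulVec_mulVec]
      rw [Matrix.mulVec_sub, Matrix.mulVec_smul]
    rw [this, enorm_mulVec V₁ hOrth]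
  refine ⟨key, fun y => ?_⟩
  have hb : ∀ z : Fin m → ℂ,
      _root_.enorm (b - A.mulVec (x₀ + Vm.mulVec z)) = _root_.enorm (r₀ - (A * Vm).mulVec z) := by
    intro z
    rw [hr₀, ← mulVec_mulVec, Matrix.mulVec_add]
    congr 1; abel
  have hn : ∀ z : Fin m → ℂ,
      _root_.enorm (H.mulVec z - β • (Pi.single 0 1 : Fin (m + 1) → ℂ)) =
        _root_.enorm (β • (Pi.single 0 1 : Fin (m + 1) → ℂ) - H.mulVec z) := by
    intro z; rw [← enorm_neg_vec, neg_sub]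
  constructor <;> intro h z
  · rw [hn, hn, ← key, ← key, ← hb, ← hb]; exact h z
  · rw [hb, hb, key, key, ← hn, ← hn]; exact h z
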